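/- Let E = V ⊕ V* with the canonical pairing ⟨(x,ξ),(y,η)⟩_E = η(x) + ξ(y), let (d,⟨·,·⟩_d) be a vector space with a nondegenerate symmetric bilinear form, and let g ⊆ d be a maximally isotropic subspace with dim d = 2·dim g. Suppose R: d → E is an injective linear map satisfying ⟨R(x),R(y)⟩_E = −⟨x,y⟩_d for all x,y ∈ d. Let K_d = R(d) and K_g = R(g). Then K_g^⊥ = K_g ⊕ K_d^⊥ (internal direct sum of subspaces of E), where ⊥ denotes orthogonal complement with respect to ⟨·,·⟩_E. -/

import Mathlib

/-- Let `E = V ⊕ V*` with the canonical pairing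
`⟨(x,ξ),(y,η)⟩_E = η(x) + ξ(y)`, `(d,⟨·,·⟩_d)` a vector space with a nondegenerate
symmetric bilinear form, and `g ⊆ d` a maximally isotropic subspace with
`dim d = 2 dim g`.  If `R : d → E` is an injective linear anti-isometry, then with
`K_d = R(d)` and `K_g = R(g)` one has the internal direct sum decomposition
`K_g^⊥ = K_g ⊕ K_d^⊥` (orthogonal complements taken with respect to `⟨·,·⟩_E`). -/
theorem stmt_1 {V d : Type*} [AddCommGroup V] [Module ℝ V] [FiniteDimensional ℝ V]
    [AddCommGroup d] [Module ℝ d] [FiniteDimensional ℝ d]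
    (pE : LinearMap.BilinForm ℝ (V × Module.Dual ℝ V))
    (hpE : ∀ u w : V × Module.Dual ℝ V, pE u w = u.2 w.1 + w.2 u.1)
    (Bd : LinearMap.BilinForm ℝ d) (hsymm : ∀ x y : d, Bd x y = Bd y x)
    (hnd : Bd.Nondegenerate)
    (g : Submodule ℝ d) (hiso : ∀ x ∈ g, ∀ y ∈ g, Bd x y = 0)
    (hmax : ∀ h : Submodule ℝ d, (∀ x ∈ h, ∀ y ∈ h, Bd x y = 0) → g ≤ h → h = g)
    (hdim : Module.finrank ℝ d = 2 * Module.finrank ℝ g)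
    (R : d →ₗ[ℝ] V × Module.Dual ℝ V) (hinj : Function.Injective R)
    (hanti : ∀ x y : d, pE (R x) (R y) = - Bd x y) :
    pE.orthogonal (g.map R) = (g.map R) ⊔ pE.orthogonal (LinearMap.range R)
      ∧ (g.map R) ⊓ pE.orthogonal (LinearMap.range R) = ⊥ := by
  classical
  have hsymmE : ∀ u w, pE u w = pE w u := by
    intro u w; rw [hpE, hpE]; ring
  have hreflE : pE.IsRefl := fun u w h => (hsymmE w u).trans h
  have hndE : pE.Nondegenerate := by
    refine (LinearMap.IsRefl.nondegenerate_iff_separatingLeft hreflE).2 ?_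
    intro u hu
    have h1 : u.2 = 0 := by
      ext v
      have := hu (v, 0)
      rw [hpE] at this
      simpa using this
    have h2 : u.1 = 0 := by
      rw [← Module.forall_dual_apply_eq_zero_iff ℝ]
      intro φ
      have := hu (0, φ)
      rw [hpE] at this
      simpa using this
    exact Prod.ext h2 h1
  -- the intersection is trivial
  have hinf : (g.map R) ⊓ pE.orthogonal (LinearMap.range R) = ⊥ := by
    rw [Submodule.eq_bot_iff]
    rintro x ⟨hx1, hx2⟩
    obtain ⟨a, _, rfl⟩ := hx1
    have ha0 : a = 0 := by
      apply hnd.1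
      intro y
      have := hx2 (R y) ⟨y, rfl⟩
      rw [hanti] at this
      rw [hsymm]
      linarith
    simp [ha0]
  refine ⟨?_, hinf⟩
  -- containment ⊇
  have hle : (g.map R) ⊔ pE.orthogonal (LinearMap.range R) ≤ pE.orthogonal (g.map R) := by
    apply sup_le
    · rintro x ⟨a, ha, rfl⟩
      rintro y ⟨b, hb, rfl⟩
      rw [hanti, hiso b hb a ha, neg_zero]
    · apply LinearMap.BilinForm.orthogonal_le
      rintro x ⟨a, _, rfl⟩
      exact ⟨a, rfl⟩
  -- dimension count
  have hKg : Module.finrank ℝ (g.map R) = Module.finrank ℝ g :=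
    ((Submodule.equivMapOfInjective R hinj g).finrank_eq).symm
  have hKd : Module.finrank ℝ (LinearMap.range R) = Module.finrank ℝ d :=
    LinearMap.finrank_range_of_inj hinj
  have hO1 := LinearMap.BilinForm.finrank_orthogonal hndE (g.map R)
  have hO2 := LinearMap.BilinForm.finrank_orthogonal hndE (LinearMap.range R)
  have hsup := Submodule.finrank_sup_add_finrank_inf_eq (g.map R)
    (pE.orthogonal (LinearMap.range R))
  rw [hinf, finrank_bot, add_zero] at hsup
  have hlerank : Module.finrank ℝ d ≤ Module.finrank ℝ (V × Module.Dual ℝ V) := by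
    rw [← hKd]; exact Submodule.finrank_le _
  have hlerank2 : Module.finrank ℝ g ≤ Module.finrank ℝ d :=
    Submodule.finrank_le g
  exact (Submodule.eq_of_le_of_finrank_le hle (by omega)).symm
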